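/- Let 0 ≤ α ≤ 1/2 and f_α(z) = z/(1-z)^{2α} (principal branch) on the unit disk D. Then inf over z ∈ D of Re(f_α(z)/z) equals 1/2^{2α}, and sup over z ∈ D of |arg(f_α(z)/z)| equals απ. -/

import Mathlib

open Metric Complex

lemma key_cos_ineq {t θ : ℝ} (ht0 : 0 ≤ t) (ht1 : t ≤ 1) (hθ0 : 0 ≤ θ)
    (hθ : θ ≤ Real.pi / 2) : (Real.cos θ) ^ t ≤ Real.cos (t * θ) := by
  have hc0 : (0:ℝ) ≤ Real.cos θ := Real.cos_nonneg_of_mem_Icc ⟨by linarith [Real.pi_pos], hθ⟩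
  have h1 : (Real.cos θ) ^ t * (1:ℝ) ^ (1 - t) ≤ t * Real.cos θ + (1 - t) * 1 :=
    Real.geom_mean_le_arith_mean2_weighted ht0 (by linarith) hc0 zero_le_one (by ring)
  have hcv : ConvexOn ℝ (Set.Icc (-(Real.pi/2)) (Real.pi/2)) (fun x => -Real.cos x) :=
    strictConcaveOn_cos_Icc.concaveOn.neg
  have h2 := hcv.2 (show θ ∈ Set.Icc (-(Real.pi/2)) (Real.pi/2) from ⟨by linarith, hθ⟩)
    (show (0:ℝ) ∈ Set.Icc (-(Real.pi/2)) (Real.pi/2) from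
      ⟨by linarith [Real.pi_pos], by linarith [Real.pi_pos]⟩)
    ht0 (show (0:ℝ) ≤ 1 - t by linarith) (show t + (1 - t) = 1 by ring)
  simp only [smul_eq_mul, mul_zero, add_zero, Real.cos_zero, mul_one] at h2
  have h2' : t * Real.cos θ + (1 - t) ≤ Real.cos (t * θ) := by linarith
  calc (Real.cos θ) ^ t = (Real.cos θ) ^ t * (1:ℝ) ^ (1-t) := by simp
    _ ≤ t * Real.cos θ + (1-t) * 1 := h1
    _ ≤ Real.cos (t * θ) := by linarith

lemma cpow_inv_re (w : ℂ) (hw : 0 < w.re) (t : ℝ) (ht0 : 0 ≤ t) (ht1 : t ≤ 1) :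
    ((w ^ (t:ℂ))⁻¹).re = ‖w‖ ^ (-t) * Real.cos (t * w.arg) ∧
    Complex.arg ((w ^ (t:ℂ))⁻¹) = -(t * w.arg) := by
  have hw0 : w ≠ 0 := by intro h; simp [h] at hw
  have harg : |w.arg| < Real.pi / 2 := abs_arg_lt_pi_div_two_iff.2 (Or.inl hw)
  have habs : 0 < ‖w‖ := norm_pos_iff.mpr hw0
  have hrw : (w ^ (t:ℂ))⁻¹ = Complex.exp (Complex.log w * (-t : ℝ)) := by
    rw [← Complex.cpow_neg, ← Complex.ofReal_neg,
      Complex.cpow_def_of_ne_zero hw0]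
  have him : (Complex.log w * (-t : ℝ)).im = -(t * w.arg) := by
    simp [Complex.mul_im, Complex.log_re, Complex.log_im]
    ring
  have hre : (Complex.log w * (-t : ℝ)).re = Real.log ‖w‖ * (-t) := by
    simp [Complex.mul_re, Complex.log_re, Complex.log_im]
  have hbound : |(-(t * w.arg))| ≤ |w.arg| := by
    rw [abs_neg, abs_mul, _root_.abs_of_nonneg ht0]
    nlinarith [abs_nonneg w.arg]
  constructor
  · rw [hrw, Complex.exp_re, hre, him, Real.cos_neg,
      Real.rpow_def_of_pos habs]
  · rw [hrw, ← Complex.log_im, Complex.log_exp] <;> rw [him]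
    · linarith [Real.pi_pos, abs_lt.1 (lt_of_le_of_lt hbound harg)]
    · linarith [Real.pi_pos, (abs_lt.1 (lt_of_le_of_lt hbound harg)).2]


/-- For the totally extremal starlike function `f_α z = z / (1-z)^{2α}` with
`0 ≤ α ≤ 1/2`: the infimum of `Re (f_α z / z)` over the disk is `1/2^{2α}` and the
supremum of `|arg (f_α z / z)|` over the disk is `απ`. -/
theorem starlike_extremal_K_and_B
    (α : ℝ) (hα : α ∈ Set.Icc (0:ℝ) (1/2)) :
    IsGLB {x : ℝ | ∃ z ∈ ball (0:ℂ) 1,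
        x = (((1 - z) ^ ((2*α : ℝ) : ℂ))⁻¹).re} (1 / 2 ^ (2*α)) ∧
    IsLUB {x : ℝ | ∃ z ∈ ball (0:ℂ) 1,
        x = |Complex.arg (((1 - z) ^ ((2*α : ℝ) : ℂ))⁻¹)|} (α * Real.pi) := by
  obtain ⟨hα0, hα1⟩ := hα
  set t : ℝ := 2 * α with htdef
  have ht0 : 0 ≤ t := by positivity
  have ht1 : t ≤ 1 := by rw [htdef]; linarith
  have pi_pos := Real.pi_pos
  -- basic facts for z in the ball
  have basic : ∀ z : ℂ, z ∈ ball (0:ℂ) 1 → 0 < (1 - z).re ∧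
      ‖1 - z‖ < 2 * Real.cos ((1 - z).arg) ∧ |(1 - z).arg| < Real.pi / 2 := by
    intro z hz
    rw [mem_ball_zero_iff] at hz
    have hre : 0 < (1 - z).re := by
      have := (Complex.abs_re_le_norm z)
      have : z.re < 1 := lt_of_le_of_lt (le_abs_self _) (lt_of_le_of_lt this hz)
      simp [Complex.sub_re]; linarith
    have hw0 : (1 - z) ≠ 0 := by
      intro h; rw [h] at hre; simp at hre
    have harg : |(1 - z).arg| < Real.pi / 2 := abs_arg_lt_pi_div_two_iff.2 (Or.inl hre)
    refine ⟨hre, ?_, harg⟩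
    have hns : Complex.normSq z < 1 := by
      have := Complex.sq_norm z
      nlinarith [norm_nonneg z]
    have hcos : Real.cos ((1 - z).arg) = (1 - z).re / ‖1 - z‖ :=
      Complex.cos_arg hw0
    have habs : 0 < ‖1 - z‖ := norm_pos_iff.mpr hw0
    have hsq : ‖1 - z‖ ^ 2 < 2 * (1 - z).re := by
      rw [Complex.sq_norm]
      have : Complex.normSq (1 - z) = 1 - 2 * z.re + Complex.normSq z := by
        simp [Complex.normSq_sub, Complex.normSq_one, Complex.mul_re]
        ring_nf
      rw [this]
      simp [Complex.sub_re]
      linarith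
    rw [hcos, ← mul_div_assoc, lt_div_iff₀ habs]
    nlinarith
  constructor
  · constructor
    · rintro x ⟨z, hz, rfl⟩
      obtain ⟨hre, hlt, harg⟩ := basic z hz
      obtain ⟨hRe, -⟩ := cpow_inv_re (1 - z) hre t ht0 ht1
      rw [hRe]
      set θ := (1 - z).arg with hθdef
      have hcosθpos : 0 < Real.cos θ :=
        Real.cos_pos_of_mem_Ioo ⟨(abs_lt.1 harg).1, (abs_lt.1 harg).2⟩
      have hkey : Real.cos θ ^ t ≤ Real.cos (t * θ) := by
        have h := key_cos_ineq ht0 ht1 (abs_nonneg θ) harg.le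
        rwa [Real.cos_abs, show t * |θ| = |t * θ| by
          rw [abs_mul, _root_.abs_of_nonneg ht0], Real.cos_abs] at h
      have hwpos : 0 < ‖1 - z‖ := by
        apply norm_pos_iff.mpr; intro h; rw [h] at hre; simp at hre
      have c2 : (2 * Real.cos θ) ^ (-t) ≤ ‖1 - z‖ ^ (-t) :=
        Real.rpow_le_rpow_of_nonpos hwpos hlt.le (neg_nonpos.2 ht0)
      calc 1 / 2 ^ t = (2 * Real.cos θ) ^ (-t) * Real.cos θ ^ t := by
            rw [Real.mul_rpow two_pos.le hcosθpos.le, mul_assoc,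
              ← Real.rpow_add hcosθpos, neg_add_cancel, Real.rpow_zero, mul_one,
              Real.rpow_neg two_pos.le, one_div]
        _ ≤ ‖1 - z‖ ^ (-t) * Real.cos (t * θ) :=
            mul_le_mul c2 hkey (by positivity) (by positivity)
    · intro b hb
      have hc : ContinuousAt (fun s : ℝ => (1 + s) ^ (-t)) 1 := by
        apply ContinuousAt.rpow_const (by fun_prop) (Or.inl (by norm_num))
      have htd : Filter.Tendsto (fun s : ℝ => (1 + s) ^ (-t)) (nhdsWithin 1 (Set.Iio 1))
          (nhds (1 / 2 ^ t)) := by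
        have hval : (1 + (1:ℝ)) ^ (-t) = 1 / 2 ^ t := by
          norm_num [Real.rpow_neg, one_div]
        exact hval ▸ (hc.tendsto.mono_left nhdsWithin_le_nhds)
      refine ge_of_tendsto htd ?_
      filter_upwards [Ioo_mem_nhdsLT_of_mem
        (show (1:ℝ) ∈ Set.Ioc 0 1 from ⟨one_pos, le_refl 1⟩)] with s hs
      apply hb
      refine ⟨(-(s:ℝ) : ℂ), ?_, ?_⟩
      · rw [mem_ball_zero_iff]
        simp [abs_of_pos hs.1]
        exact hs.2
      · have h1z : (1 : ℂ) - (-(s:ℝ) : ℂ) = ((1 + s : ℝ) : ℂ) := by push_cast; ring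
        have hpre : 0 < (((1 + s : ℝ) : ℂ)).re := by simp; linarith [hs.1]
        obtain ⟨hRe, -⟩ := cpow_inv_re ((1 + s : ℝ) : ℂ) hpre t ht0 ht1
        rw [h1z, hRe, Complex.norm_real, Real.norm_eq_abs, _root_.abs_of_pos (by linarith [hs.1] : (0:ℝ) < 1 + s),
          Complex.arg_ofReal_of_nonneg (by linarith [hs.1]), mul_zero, Real.cos_zero, mul_one]
  · constructor
    · rintro x ⟨z, hz, rfl⟩
      obtain ⟨hre, -, harg⟩ := basic z hz
      obtain ⟨-, hArg⟩ := cpow_inv_re (1 - z) hre t ht0 ht1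
      rw [hArg, abs_neg, abs_mul, _root_.abs_of_nonneg ht0]
      calc t * |(1 - z).arg| ≤ t * (Real.pi / 2) :=
            mul_le_mul_of_nonneg_left harg.le ht0
        _ = α * Real.pi := by rw [htdef]; ring
    · intro b hb
      have htd : Filter.Tendsto (fun θ : ℝ => t * θ) (nhdsWithin (Real.pi/2) (Set.Iio (Real.pi/2)))
          (nhds (α * Real.pi)) := by
        have : Filter.Tendsto (fun θ : ℝ => t * θ) (nhds (Real.pi/2)) (nhds (t * (Real.pi/2))) :=
          (continuous_const.mul continuous_id).tendsto _
        have hval : t * (Real.pi / 2) = α * Real.pi := by rw [htdef]; ring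
        exact hval ▸ this.mono_left nhdsWithin_le_nhds
      refine le_of_tendsto htd ?_
      filter_upwards [Ioo_mem_nhdsLT_of_mem
        (show Real.pi/2 ∈ Set.Ioc 0 (Real.pi/2) from ⟨by linarith, le_refl _⟩)] with θ hθ
      apply hb
      have hcpos : 0 < Real.cos θ := Real.cos_pos_of_mem_Ioo ⟨by linarith [hθ.1], hθ.2⟩
      have hspos : 0 < Real.sin θ := Real.sin_pos_of_pos_of_lt_pi hθ.1 (by linarith [hθ.2])
      have pyth : Real.sin θ ^ 2 + Real.cos θ ^ 2 = 1 := Real.sin_sq_add_cos_sq θ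
      have pythc : ((Real.sin θ : ℂ)) ^ 2 + ((Real.cos θ : ℂ)) ^ 2 = 1 := by
        exact_mod_cast pyth
      refine ⟨1 - (Real.cos θ : ℂ) * Complex.exp ((θ:ℂ) * Complex.I), ?_, ?_⟩
      · rw [mem_ball_zero_iff]
        have hid : 1 - (Real.cos θ : ℂ) * Complex.exp ((θ:ℂ) * Complex.I)
            = (Real.sin θ : ℂ) * (-Complex.I * Complex.exp ((θ:ℂ) * Complex.I)) := by
          rw [Complex.exp_mul_I, ← Complex.ofReal_cos, ← Complex.ofReal_sin]
          linear_combination -pythc + ((Real.sin θ : ℂ)) ^ 2 * Complex.I_sq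
        rw [hid]
        simp only [norm_mul, Complex.norm_real, Real.norm_eq_abs, norm_neg,
          Complex.norm_I, Complex.norm_exp_ofReal_mul_I, one_mul, mul_one]
        rw [_root_.abs_of_pos hspos]
        nlinarith
      · have hsub : (1 : ℂ) - (1 - (Real.cos θ : ℂ) * Complex.exp ((θ:ℂ) * Complex.I))
            = (Real.cos θ : ℂ) * Complex.exp ((θ:ℂ) * Complex.I) := sub_sub_cancel _ _
        have hwre : 0 < ((Real.cos θ : ℂ) * Complex.exp ((θ:ℂ) * Complex.I)).re := by
          simp [Complex.mul_re, Complex.exp_ofReal_mul_I_re, Complex.exp_ofReal_mul_I_im]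
          positivity
        obtain ⟨-, hArg⟩ := cpow_inv_re _ hwre t ht0 ht1
        have hargw : ((Real.cos θ : ℂ) * Complex.exp ((θ:ℂ) * Complex.I)).arg = θ := by
          rw [Complex.exp_mul_I, Complex.arg_real_mul _ hcpos,
            Complex.arg_cos_add_sin_mul_I
              (⟨by linarith [hθ.1], by linarith [hθ.2]⟩ : θ ∈ Set.Ioc (-Real.pi) Real.pi)]
        rw [hsub, hArg, hargw, abs_neg, _root_.abs_of_nonneg (mul_nonneg ht0 hθ.1.le)]
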